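/- arXiv:1909.04593 — 2 statements merged into one kernel-verified Lean document; each statement's English description precedes it below -/
import Mathlib

section
/- For every real r ≥ 0 and every t ∈ [−π, π], (t/π)² + (1−r)² ≤ 2 · ((cos t − r)² + sin² t); equivalently, |1 − r + i·t/π| / |e^{i(ϑ+t)} − r·e^{iϑ}| ≤ √2 for all ϑ ∈ ℝ whenever the denominator is nonzero. -/
open Real Complex

lemma key_ineq (r : ℝ) (hr : 0 ≤ r) (t : ℝ) (ht : t ∈ Set.Icc (-π) π) :
    (t / π) ^ 2 + (1 - r) ^ 2 ≤ 2 * ((Real.cos t - r) ^ 2 + Real.sin t ^ 2) := by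
  obtain ⟨ht1, ht2⟩ := ht
  have hπ : 0 < π := Real.pi_pos
  have habs : |t| ≤ π := abs_le.mpr ⟨ht1, ht2⟩
  have hjordan : 2 / π * (|t| / 2) ≤ Real.sin (|t| / 2) :=
    Real.mul_le_sin (by positivity) (by linarith)
  have h1 : |t| / π ≤ Real.sin (|t| / 2) := by
    have he : 2 / π * (|t| / 2) = |t| / π := by field_simp
    linarith [he ▸ hjordan]
  have hsq : (t / π) ^ 2 ≤ Real.sin (|t| / 2) ^ 2 := by
    have h0 : (t / π) ^ 2 = (|t| / π) ^ 2 := by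
      rw [div_pow, div_pow, _root_.sq_abs]
    rw [h0]
    exact pow_le_pow_left₀ (by positivity) h1 2
  have hcos : 1 - Real.cos t = 2 * Real.sin (|t| / 2) ^ 2 := by
    have hc : Real.cos t = 1 - 2 * Real.sin (t / 2) ^ 2 := by
      have h2 : Real.cos (2 * (t / 2)) = 2 * Real.cos (t / 2) ^ 2 - 1 := Real.cos_two_mul (t / 2)
      have h3 : Real.sin (t / 2) ^ 2 + Real.cos (t / 2) ^ 2 = 1 := Real.sin_sq_add_cos_sq (t / 2)
      have h4 : 2 * (t / 2) = t := by ring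
      rw [h4] at h2
      linarith
    have hsin : Real.sin (|t| / 2) ^ 2 = Real.sin (t / 2) ^ 2 := by
      rcases abs_choice t with h | h
      · rw [h]
      · rw [h, neg_div, Real.sin_neg, neg_sq]
    rw [hsin]; linarith
  have hcost : 2 * (t / π) ^ 2 ≤ 1 - Real.cos t := by
    rw [hcos]; linarith
  have hexpand : (Real.cos t - r) ^ 2 + Real.sin t ^ 2
      = (1 - r) ^ 2 + 2 * r * (1 - Real.cos t) := by
    nlinarith [Real.sin_sq_add_cos_sq t]
  rw [hexpand]
  have hs : (t / π) ^ 2 ≤ 1 := by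
    rw [div_pow, div_le_one (by positivity)]
    calc t ^ 2 = |t| ^ 2 := (_root_.sq_abs t).symm
    _ ≤ π ^ 2 := pow_le_pow_left₀ (abs_nonneg t) habs 2
  have h4 : 4 * r * ((t / π) ^ 2) ≤ 2 * r * (1 - Real.cos t) := by
    nlinarith [mul_le_mul_of_nonneg_left hcost hr]
  rcases le_or_gt r (1/8) with h | h
  · nlinarith [mul_nonneg (sub_nonneg.mpr hs) (by linarith : (0:ℝ) ≤ 1 - 8 * r),
      sq_nonneg (t / π)]
  · nlinarith [mul_nonneg (sq_nonneg (t / π)) (by linarith : (0:ℝ) ≤ 8 * r - 1),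
      sq_nonneg (t / π)]

/-- **Uniform ratio estimate near the contour crossing.** For every real
`r ≥ 0` and every `t ∈ [−π, π]`,
`(t/π)² + (1−r)² ≤ 2·((cos t − r)² + sin² t)`; equivalently,
`|1 − r + i·t/π| / |e^{i(ϑ+t)} − r·e^{iϑ}| ≤ √2` for all `ϑ ∈ ℝ` whenever the
denominator is nonzero. -/
theorem ratio_estimate (r : ℝ) (hr : 0 ≤ r) (t : ℝ) (ht : t ∈ Set.Icc (-π) π) :
    ((t / π) ^ 2 + (1 - r) ^ 2 ≤ 2 * ((Real.cos t - r) ^ 2 + Real.sin t ^ 2)) ∧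
    (∀ ϑ : ℝ,
      Complex.exp ((ϑ + t : ℝ) * Complex.I) - (r : ℂ) * Complex.exp ((ϑ : ℝ) * Complex.I) ≠ 0 →
      ‖(1 : ℂ) - (r : ℂ) + Complex.I * ((t / π : ℝ) : ℂ)‖ /
        ‖Complex.exp ((ϑ + t : ℝ) * Complex.I) - (r : ℂ) * Complex.exp ((ϑ : ℝ) * Complex.I)‖
        ≤ Real.sqrt 2) := by
  have key := key_ineq r hr t ht
  refine ⟨key, fun ϑ hne => ?_⟩
  set D : ℂ := Complex.exp ((ϑ + t : ℝ) * Complex.I) - (r : ℂ) * Complex.exp ((ϑ : ℝ) * Complex.I) with hD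
  set N : ℂ := (1 : ℂ) - (r : ℂ) + Complex.I * ((t / π : ℝ) : ℂ) with hN
  have hsplit : ((ϑ + t : ℝ) : ℂ) * Complex.I
      = ((ϑ : ℝ) : ℂ) * Complex.I + ((t : ℝ) : ℂ) * Complex.I := by
    push_cast; ring
  have hfac : D = Complex.exp ((ϑ : ℝ) * Complex.I)
      * (Complex.exp ((t : ℝ) * Complex.I) - (r : ℂ)) := by
    rw [hD, hsplit, Complex.exp_add]; ring
  have hDnorm : ‖D‖ ^ 2 = (Real.cos t - r) ^ 2 + Real.sin t ^ 2 := by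
    rw [hfac, norm_mul, Complex.norm_exp_ofReal_mul_I, one_mul,
      Complex.sq_norm, Complex.normSq_apply]
    simp [Complex.sub_re, Complex.sub_im, Complex.exp_ofReal_mul_I_re,
      Complex.exp_ofReal_mul_I_im]
    ring
  have hNnorm : ‖N‖ ^ 2 = (t / π) ^ 2 + (1 - r) ^ 2 := by
    rw [hN, Complex.sq_norm, Complex.normSq_apply]
    simp
    ring
  have hDpos : 0 < ‖D‖ := norm_pos_iff.mpr hne
  rw [div_le_iff₀ hDpos]
  have h2 : ‖N‖ ^ 2 ≤ (Real.sqrt 2 * ‖D‖) ^ 2 := by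
    rw [mul_pow, Real.sq_sqrt (by norm_num : (0:ℝ) ≤ 2), hNnorm, hDnorm]
    exact key
  calc ‖N‖ = Real.sqrt (‖N‖ ^ 2) := (Real.sqrt_sq (norm_nonneg N)).symm
  _ ≤ Real.sqrt ((Real.sqrt 2 * ‖D‖) ^ 2) := Real.sqrt_le_sqrt h2
  _ = Real.sqrt 2 * ‖D‖ := Real.sqrt_sq (by positivity)
end

section
/- For every a ∈ (0, 1] and every real u with −1/2 < u < (1−a)/(1+a), ln(1+u) ≤ u − ((1+a)/4)·u². -/
open Real

/-- **Elementary logarithm inequality.** For every `a ∈ (0,1]` and every real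
`u` with `−1/2 < u < (1−a)/(1+a)`, `ln(1+u) ≤ u − ((1+a)/4)·u²`. -/
theorem log_le_sub_quadratic (a : ℝ) (ha₀ : 0 < a) (ha₁ : a ≤ 1)
    (u : ℝ) (hu₁ : -(1/2) < u) (hu₂ : u < (1 - a) / (1 + a)) :
    Real.log (1 + u) ≤ u - (1 + a) / 4 * u ^ 2 := by
  have ha : (0:ℝ) < 1 + a := by linarith
  have hua : u * (1 + a) < 1 - a := (lt_div_iff₀ ha).mp hu₂
  set c : ℝ := (1 + a) / 4 with hc
  set f : ℝ → ℝ := fun t => t - c * t ^ 2 - Real.log (1 + t) with hf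
  have hderiv : ∀ t : ℝ, -(1/2 : ℝ) < t →
      HasDerivAt f (1 - 2 * c * t - (1 + t)⁻¹) t := by
    intro t ht
    have h1t : (0:ℝ) < 1 + t := by linarith
    have h1 : HasDerivAt (fun s : ℝ => 1 + s) 1 t := by
      simpa using (hasDerivAt_id t).const_add (1:ℝ)
    have hlog : HasDerivAt (fun s : ℝ => Real.log (1 + s)) ((1 + t)⁻¹) t := by
      simpa using h1.log (ne_of_gt h1t)
    have hsq : HasDerivAt (fun s : ℝ => s - c * s ^ 2) (1 - c * (2 * t)) t := by
      have h2 := ((hasDerivAt_pow 2 t).const_mul c)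
      simpa using (hasDerivAt_id' t).fun_sub h2
    have := hsq.fun_sub hlog
    rw [show (1 - 2 * c * t - (1 + t)⁻¹) = 1 - c * (2 * t) - (1 + t)⁻¹ by ring]
    exact this
  have hf0 : f 0 = 0 := by simp [hf]
  have key : 0 ≤ f u := by
    rcases le_or_gt 0 u with hu0 | hu0
    · have hmono : MonotoneOn f (Set.Icc 0 u) := by
        apply monotoneOn_of_deriv_nonneg (convex_Icc 0 u)
        · intro t ht
          exact (hderiv t (by linarith [ht.1])).continuousAt.continuousWithinAt
        · intro t ht
          rw [interior_Icc] at ht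
          exact (hderiv t (by linarith [ht.1])).differentiableAt.differentiableWithinAt
        · intro t ht
          rw [interior_Icc] at ht
          obtain ⟨ht0, htu⟩ := ht
          have h1t : (0:ℝ) < 1 + t := by linarith
          rw [(hderiv t (by linarith)).deriv]
          have hta : t * (1 + a) < 1 - a := by nlinarith
          have hkey : (1:ℝ) ≤ (1 - 2 * c * t) * (1 + t) := by
            nlinarith [hc, mul_pos ht0 (show (0:ℝ) < (1 - a) - (1 + a) * t by linarith)]
          have : (1 + t)⁻¹ ≤ 1 - 2 * c * t := by
            rw [← one_div, div_le_iff₀ h1t]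
            linarith [hkey]
          linarith
      have := hmono (Set.left_mem_Icc.mpr hu0) (Set.right_mem_Icc.mpr hu0) hu0
      linarith [hf0 ▸ this]
    · have hanti : AntitoneOn f (Set.Icc u 0) := by
        apply antitoneOn_of_deriv_nonpos (convex_Icc u 0)
        · intro t ht
          exact (hderiv t (by linarith [ht.1])).continuousAt.continuousWithinAt
        · intro t ht
          rw [interior_Icc] at ht
          exact (hderiv t (by linarith [ht.1])).differentiableAt.differentiableWithinAt
        · intro t ht
          rw [interior_Icc] at ht
          obtain ⟨htu, ht0⟩ := ht
          have h1t : (0:ℝ) < 1 + t := by linarith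
          rw [(hderiv t (by linarith)).deriv]
          have h2 : (1 + a) * t ≤ 0 := mul_nonpos_of_nonneg_of_nonpos ha.le ht0.le
          have hkey : (1 - 2 * c * t) * (1 + t) ≤ 1 := by
            nlinarith [hc, mul_nonneg (neg_nonneg.mpr ht0.le) (show (0:ℝ) ≤ (1 - a) - (1 + a) * t by linarith)]
          have : 1 - 2 * c * t ≤ (1 + t)⁻¹ := by
            rw [← one_div, le_div_iff₀ h1t]
            linarith [hkey]
          linarith
      have := hanti (Set.left_mem_Icc.mpr hu0.le) (Set.right_mem_Icc.mpr hu0.le) hu0.le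
      linarith [hf0 ▸ this]
  have : Real.log (1 + u) ≤ u - c * u ^ 2 := by
    simp only [hf] at key; linarith
  simpa [hc] using this
end
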